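/- Let C ⊆ ℝⁿ be closed and super-regular at x̄ ∈ C with parameter δ ∈ (0,1) on a neighborhood V (i.e., ⟨z - y, v⟩ ≤ δ‖z-y‖‖v‖ for z,y ∈ C ∩ V, v ∈ N_C(y)). Suppose x′ ∈ V, x ∈ P_C(x′) ∩ V, x̄ ∈ C ∩ V, and x′ = x + t v with t = ‖x′ - x‖ > 0 and v a unit normal in N_C(x). Then ‖x - x̄‖ ≤ (1/√(1-δ²)) ‖x′ - x̄‖. -/
import Mathlib


open scoped RealInnerProductSpace
open Metric Filter

/-- The regular (Fréchet) normal cone of `C` at `x`. -/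
def regNormalCone {n : ℕ} (C : Set (EuclideanSpace ℝ (Fin n)))
    (x : EuclideanSpace ℝ (Fin n)) : Set (EuclideanSpace ℝ (Fin n)) :=
  {v | ∀ ε > 0, ∃ δ > 0, ∀ y ∈ C, ‖y - x‖ < δ → ⟪v, y - x⟫ ≤ ε * ‖y - x‖}

/-- The limiting normal cone of `C` at `x`: limits of regular normals at points of `C`
converging to `x`. -/
def limNormalCone {n : ℕ} (C : Set (EuclideanSpace ℝ (Fin n)))
    (x : EuclideanSpace ℝ (Fin n)) : Set (EuclideanSpace ℝ (Fin n)) :=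
  {v | ∃ xs vs : ℕ → EuclideanSpace ℝ (Fin n), (∀ i, xs i ∈ C) ∧
    Tendsto xs atTop (nhds x) ∧ (∀ i, vs i ∈ regNormalCone C (xs i)) ∧
    Tendsto vs atTop (nhds v)}

/-- `C` is super-regular at `x̄` (Lewis–Luke–Malick): for all `δ > 0` there is a
neighborhood `V` of `x̄` with `⟪z - y, v⟫ ≤ δ‖z - y‖‖v‖` for all `z, y ∈ C ∩ V` and
`v ∈ N_C(y)`. -/
def SuperRegularAt {n : ℕ} (C : Set (EuclideanSpace ℝ (Fin n)))
    (xbar : EuclideanSpace ℝ (Fin n)) : Prop :=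
  ∀ δ > 0, ∃ V ∈ nhds xbar, ∀ z ∈ C ∩ V, ∀ y ∈ C ∩ V, ∀ v ∈ limNormalCone C y,
    ⟪z - y, v⟫ ≤ δ * ‖z - y‖ * ‖v‖

/-- Under a uniform super-regularity bound with parameter `δ ∈ (0,1)` on `V`: if `x` is a
projection of `x′` onto `C`, both in `V`, `x̄ ∈ C ∩ V`, and `x′ = x + t v` with `v` a unit
normal of `C` at `x` and `t = ‖x′ - x‖ > 0`, then `‖x - x̄‖ ≤ (1/√(1-δ²)) ‖x′ - x̄‖`. -/
theorem superregular_projection_length_bound {n : ℕ}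
    (C : Set (EuclideanSpace ℝ (Fin n))) (hCc : IsClosed C)
    (xbar : EuclideanSpace ℝ (Fin n)) (δ : ℝ) (hδ : δ ∈ Set.Ioo (0:ℝ) 1)
    (V : Set (EuclideanSpace ℝ (Fin n))) (hV : V ∈ nhds xbar)
    (hsr : ∀ z ∈ C ∩ V, ∀ y ∈ C ∩ V, ∀ v ∈ limNormalCone C y,
      ⟪z - y, v⟫ ≤ δ * ‖z - y‖ * ‖v‖)
    (hxbarC : xbar ∈ C ∩ V)
    (x' x v : EuclideanSpace ℝ (Fin n)) (t : ℝ)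
    (hx'V : x' ∈ V) (hxC : x ∈ C) (hxV : x ∈ V)
    (hproj : dist x' x = infDist x' C)
    (hvN : v ∈ limNormalCone C x) (hv : ‖v‖ = 1)
    (ht : t = ‖x' - x‖) (htpos : 0 < t) (hx' : x' = x + t • v) :
    ‖x - xbar‖ ≤ (1 / Real.sqrt (1 - δ ^ 2)) * ‖x' - xbar‖ := by
  obtain ⟨hδ0, hδ1⟩ := hδ
  set c := ‖x - xbar‖ with hc
  set d := ‖x' - xbar‖ with hd
  have hs : ⟪xbar - x, v⟫ ≤ δ * c := by
    have h := hsr xbar hxbarC x ⟨hxC, hxV⟩ v hvN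
    rw [hv] at h
    have : ‖xbar - x‖ = c := by rw [norm_sub_rev]
    simpa [this] using h
  have hsq : d ^ 2 = c ^ 2 - 2 * t * ⟪xbar - x, v⟫ + t ^ 2 := by
    have he : x' - xbar = (x - xbar) + t • v := by
      rw [hx']; abel
    have := norm_add_sq_real (x - xbar) (t • v)
    rw [← he] at this
    have hip : ⟪x - xbar, t • v⟫ = - (t * ⟪xbar - x, v⟫) := by
      rw [real_inner_smul_right, ← neg_sub xbar x, inner_neg_left]
      ring
    have hnv : ‖t • v‖ = t := by
      rw [norm_smul, hv, Real.norm_eq_abs, abs_of_pos htpos, mul_one]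
    rw [hip, hnv] at this
    rw [hd, this]; ring
  have hc0 : 0 ≤ c := norm_nonneg _
  have hd0 : 0 ≤ d := norm_nonneg _
  have hkey : (1 - δ ^ 2) * c ^ 2 ≤ d ^ 2 := by
    nlinarith [sq_nonneg (t - δ * c), mul_pos htpos hδ0, mul_nonneg hδ0.le hc0]
  set r := Real.sqrt (1 - δ ^ 2) with hr
  have h1δ : 0 < 1 - δ ^ 2 := by nlinarith
  have hr0 : 0 < r := Real.sqrt_pos.mpr h1δ
  have hr2 : r ^ 2 = 1 - δ ^ 2 := Real.sq_sqrt h1δ.le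
  have hrc : r * c ≤ d := by
    nlinarith [mul_nonneg hr0.le hc0]
  rw [div_mul_eq_mul_div, one_mul, le_div_iff₀ hr0]
  linarith [hrc]
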